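/- arXiv:2209.07481 — 9 statements merged into one kernel-verified Lean document; each statement's English description precedes it below -/
import Mathlib

section
/- Let f : ℝ → ℝ be differentiable and strictly convex, and D_f the Bregman divergence it generates. Given a₁,…,a_N ∈ ℝ and weights β₁,…,β_N ≥ 0 with ∑βᵢ = 1, the function μ ↦ ∑ᵢ βᵢ D_f(aᵢ, μ) attains its unique minimum at μ* = ∑ᵢ βᵢ aᵢ, the arithmetic mean of the inputs. -/
/-- Scalar Bregman divergence generated by `f`. -/
noncomputable def breg (f : ℝ → ℝ) (a b : ℝ) : ℝ := f a - f b - (a - b) * deriv f b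

lemma breg_pos_of_ne (f : ℝ → ℝ) (hdiff : Differentiable ℝ f)
    (hconv : StrictConvexOn ℝ Set.univ f) {x y : ℝ} (hxy : x ≠ y) :
    0 < breg f x y := by
  unfold breg
  rcases lt_or_gt_of_ne hxy with h | h
  · have := hconv.slope_lt_deriv (Set.mem_univ x) (Set.mem_univ y) h (hdiff y)
    rw [slope_def_field, div_lt_iff₀ (by linarith)] at this
    nlinarith
  · have := hconv.deriv_lt_slope (Set.mem_univ y) (Set.mem_univ x) h (hdiff y)
    rw [slope_def_field, lt_div_iff₀ (by linarith)] at this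
    nlinarith

/-- The arithmetic mean is the unique minimizer of the expected Bregman divergence
in the second argument. -/
theorem breg_expected_unique_min_arithmetic_mean (f : ℝ → ℝ)
    (hdiff : Differentiable ℝ f) (hconv : StrictConvexOn ℝ Set.univ f)
    {N : ℕ} (a : Fin N → ℝ)
    (β : Fin N → ℝ) (hβ : ∀ i, 0 ≤ β i) (hsum : ∑ i, β i = 1) :
    ∀ μ : ℝ, μ ≠ ∑ i, β i * a i →
      ∑ i, β i * breg f (a i) (∑ j, β j * a j) < ∑ i, β i * breg f (a i) μ := by
  intro μ hμ
  set m := ∑ j, β j * a j with hm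
  have expand : ∀ c : ℝ, ∑ i, β i * breg f (a i) c
      = (∑ i, β i * f (a i)) - f c - (m - c) * deriv f c := by
    intro c
    have h : ∀ i, β i * breg f (a i) c
        = β i * f (a i) - β i * f c - β i * a i * deriv f c + β i * (c * deriv f c) := by
      intro i; simp only [breg]; ring
    simp only [h]
    rw [Finset.sum_add_distrib, Finset.sum_sub_distrib, Finset.sum_sub_distrib,
      ← Finset.sum_mul, ← Finset.sum_mul, ← Finset.sum_mul, hsum, ← hm]
    ring
  rw [expand m, expand μ]
  have hpos : 0 < breg f m μ := breg_pos_of_ne f hdiff hconv (Ne.symm hμ)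
  simp only [breg] at hpos
  nlinarith [hpos]
end

section
/- Let f : ℝ → ℝ be differentiable and convex with Bregman divergence D_f, inputs a₁,…,a_N ∈ ℝ, weights βᵢ ≥ 0 with ∑βᵢ = 1, μ* = ∑ᵢ βᵢ aᵢ, and let μ ∈ ℝ be arbitrary. Then ∑ᵢ βᵢ D_f(aᵢ, μ) − ∑ᵢ βᵢ D_f(aᵢ, μ*) = D_f(μ*, μ); i.e., the suboptimality of any representative μ is exactly the Bregman divergence from the mean to μ (bias–variance decomposition for Bregman divergences). -/
/-- Bias–variance decomposition for Bregman divergences: the suboptimality of any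
representative `μ` equals the Bregman divergence from the mean to `μ`. -/
theorem breg_bias_variance (f : ℝ → ℝ)
    (hdiff : Differentiable ℝ f) (hconv : ConvexOn ℝ Set.univ f)
    {N : ℕ} (a : Fin N → ℝ)
    (β : Fin N → ℝ) (hβ : ∀ i, 0 ≤ β i) (hsum : ∑ i, β i = 1) (μ : ℝ) :
    ∑ i, β i * breg f (a i) μ - ∑ i, β i * breg f (a i) (∑ j, β j * a j) =
      breg f (∑ j, β j * a j) μ := by
  have h : ∀ c : ℝ, ∑ i, β i * breg f (a i) c =
      (∑ i, β i * f (a i)) - f c - ((∑ j, β j * a j) - c) * deriv f c := by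
    intro c
    have : ∀ i, β i * breg f (a i) c =
        β i * f (a i) - β i * f c - (β i * a i - β i * c) * deriv f c := by
      intro i; simp [breg]; ring
    rw [Finset.sum_congr rfl fun i _ => this i]
    simp [Finset.sum_sub_distrib, ← Finset.sum_mul, ← Finset.mul_sum, hsum]
  rw [h, h, breg]
  ring
end

section
/- Let ρ : I → ℝ be strictly monotonic and continuous on an interval I, and f : ρ(I) → ℝ be differentiable and strictly convex. Given inputs u₁,…,u_N ∈ I and weights βᵢ ≥ 0 with ∑βᵢ = 1 such that ∑ᵢ βᵢ ρ(uᵢ) ∈ ρ(I), the function μ ↦ ∑ᵢ βᵢ D_f(ρ(uᵢ), ρ(μ)) over μ ∈ I has unique minimizer μ* = ρ⁻¹(∑ᵢ βᵢ ρ(uᵢ)), the quasi-arithmetic mean; and the minimum value equals ∑ᵢ βᵢ f(ρ(uᵢ)) − f(ρ(μ*)). -/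
lemma breg_pos {S : Set ℝ} {f : ℝ → ℝ} (hconv : StrictConvexOn ℝ S f)
    (hdiff : Differentiable ℝ f) {a b : ℝ} (ha : a ∈ S) (hb : b ∈ S) (hab : a ≠ b) :
    0 < breg f a b := by
  unfold breg
  rcases lt_or_gt_of_ne hab with h | h
  · have := hconv.slope_lt_deriv ha hb h (hdiff b)
    rw [slope_def_field, div_lt_iff₀ (by linarith)] at this
    nlinarith
  · have := hconv.deriv_lt_slope hb ha h (hdiff b)
    rw [slope_def_field, lt_div_iff₀ (by linarith)] at this
    nlinarith

/-- The quasi-arithmetic mean `μ* = ρ⁻¹(∑ βᵢ ρ(uᵢ))` is the unique minimizer of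
`μ ↦ ∑ βᵢ D_f(ρ(uᵢ), ρ(μ))` over `I`, and the minimum value is the Jensen gap. -/
theorem quasiArithmeticMean_breg_min {I : Set ℝ} (ρ : ℝ → ℝ)
    (hmono : StrictMonoOn ρ I ∨ StrictAntiOn ρ I) (hcont : ContinuousOn ρ I)
    (f : ℝ → ℝ) (hdiff : Differentiable ℝ f) (hconv : StrictConvexOn ℝ (ρ '' I) f)
    {N : ℕ} (u : Fin N → ℝ) (hu : ∀ i, u i ∈ I)
    (β : Fin N → ℝ) (hβ : ∀ i, 0 ≤ β i) (hsum : ∑ i, β i = 1)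
    (μstar : ℝ) (hμI : μstar ∈ I) (hμ : ρ μstar = ∑ i, β i * ρ (u i)) :
    (∀ μ ∈ I, μ ≠ μstar →
      ∑ i, β i * breg f (ρ (u i)) (ρ μstar) < ∑ i, β i * breg f (ρ (u i)) (ρ μ)) ∧
    ∑ i, β i * breg f (ρ (u i)) (ρ μstar) = ∑ i, β i * f (ρ (u i)) - f (ρ μstar) := by
  have key : ∀ b : ℝ, ∑ i, β i * breg f (ρ (u i)) b
      = ∑ i, β i * f (ρ (u i)) - f b - (ρ μstar - b) * deriv f b := by
    intro b
    simp only [breg, mul_sub, Finset.sum_sub_distrib, ← Finset.sum_mul, hsum, one_mul, hμ,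
      sub_mul, Finset.sum_sub_distrib, mul_assoc]
    ring_nf
    rw [Finset.mul_sum]
    simp only [mul_comm, mul_left_comm, mul_assoc]
  have hval : ∑ i, β i * breg f (ρ (u i)) (ρ μstar)
      = ∑ i, β i * f (ρ (u i)) - f (ρ μstar) := by
    rw [key]; ring
  refine ⟨fun μ hμmem hne => ?_, hval⟩
  have hρne : ρ μstar ≠ ρ μ := by
    rcases hmono with h | h
    · exact fun he => hne (h.injOn hμI hμmem he).symm
    · exact fun he => hne (h.injOn hμI hμmem he).symm
  have hpos := breg_pos hconv hdiff (Set.mem_image_of_mem ρ hμI)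
    (Set.mem_image_of_mem ρ hμmem) hρne
  rw [hval, key]
  unfold breg at hpos
  linarith
end

section
/- Let F : ℝ^d → ℝ be differentiable and strictly convex, ρ : I → ℝ a strictly monotonic continuous function applied coordinatewise to vectors in I^d, and D_F(x,y) = F(x) − F(y) − ⟨x − y, ∇F(y)⟩. For inputs u₁,…,u_N ∈ I^d and weights βᵢ ≥ 0 with ∑βᵢ = 1 such that ∑ᵢ βᵢ ρ(uᵢ) lies coordinatewise in ρ(I), the map μ ↦ ∑ᵢ βᵢ D_F(ρ(uᵢ), ρ(μ)) has unique minimizer μ* with ρ(μ*) = ∑ᵢ βᵢ ρ(uᵢ), and ∑ᵢ βᵢ D_F(ρ(uᵢ), ρ(μ)) − ∑ᵢ βᵢ D_F(ρ(uᵢ), ρ(μ*)) = D_F(ρ(μ*), ρ(μ)) for all μ. -/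
/-- Vector Bregman divergence on `ℝ^d` generated by `F`. -/
noncomputable def bregV {d : ℕ} (F : (Fin d → ℝ) → ℝ) (x y : Fin d → ℝ) : ℝ :=
  F x - F y - fderiv ℝ F y (x - y)

lemma bregV_pos {d : ℕ} (F : (Fin d → ℝ) → ℝ)
    (hFdiff : Differentiable ℝ F) (hFconv : StrictConvexOn ℝ Set.univ F)
    {x y : Fin d → ℝ} (hxy : x ≠ y) : 0 < bregV F x y := by
  set v : Fin d → ℝ := x - y with hv
  have hv0 : v ≠ 0 := sub_ne_zero.mpr hxy
  set g : ℝ → ℝ := fun t => F (y + t • v) with hg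
  have hφ : ∀ t : ℝ, HasDerivAt (fun t : ℝ => y + t • v) v t := by
    intro t
    simpa using ((hasDerivAt_id t).smul_const v).const_add y
  have hderiv : ∀ t : ℝ, HasDerivAt g (fderiv ℝ F (y + t • v) v) t := by
    intro t
    exact (hFdiff (y + t • v)).hasFDerivAt.comp_hasDerivAt t (hφ t)
  have hgconv : StrictConvexOn ℝ Set.univ g := by
    refine ⟨convex_univ, ?_⟩
    intro s _ t _ hst a b ha hb hab
    have h1 : y + (a * s + b * t) • v = a • (y + s • v) + b • (y + t • v) := by
      have hb' : b = 1 - a := by linarith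
      subst hb'; module
    have h2 : (y + s • v) ≠ (y + t • v) := by
      intro h
      exact hst (smul_left_injective ℝ hv0 (by simpa using h))
    have := hFconv.2 (Set.mem_univ (y + s • v)) (Set.mem_univ (y + t • v)) h2 ha hb hab
    simpa [hg, h1] using this
  have hlt := hgconv.lt_slope_of_hasDerivAt (Set.mem_univ (0:ℝ)) (Set.mem_univ (1:ℝ))
    one_pos (by simpa using hderiv 0)
  have hs : slope g 0 1 = F x - F y := by
    simp [slope, hg, hv]
  rw [hs] at hlt
  simp only [bregV, ← hv]
  linarith


/-- Vector-valued rho-tau Bregman Information: with `ρ` applied coordinatewise,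
`μ*` with `ρ(μ*) = ∑ βᵢ ρ(uᵢ)` uniquely minimizes the expected Bregman divergence,
and the suboptimality of any `μ` is `D_F(ρ(μ*), ρ(μ))`. -/
theorem bregV_quasiArithmeticMean {d : ℕ} (F : (Fin d → ℝ) → ℝ)
    (hFdiff : Differentiable ℝ F) (hFconv : StrictConvexOn ℝ Set.univ F)
    {I : Set ℝ} (ρ : ℝ → ℝ) (hmono : StrictMonoOn ρ I ∨ StrictAntiOn ρ I)
    (hcont : ContinuousOn ρ I)
    {N : ℕ} (u : Fin N → (Fin d → ℝ)) (hu : ∀ i j, u i j ∈ I)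
    (β : Fin N → ℝ) (hβ : ∀ i, 0 ≤ β i) (hsum : ∑ i, β i = 1)
    (μstar : Fin d → ℝ) (hμI : ∀ j, μstar j ∈ I)
    (hμ : (fun j => ρ (μstar j)) = ∑ i, β i • (fun j => ρ (u i j))) :
    (∀ μ : Fin d → ℝ, (∀ j, μ j ∈ I) → μ ≠ μstar →
      ∑ i, β i * bregV F (fun j => ρ (u i j)) (fun j => ρ (μstar j)) <
        ∑ i, β i * bregV F (fun j => ρ (u i j)) (fun j => ρ (μ j))) ∧
    (∀ μ : Fin d → ℝ, (∀ j, μ j ∈ I) →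
      ∑ i, β i * bregV F (fun j => ρ (u i j)) (fun j => ρ (μ j)) -
        ∑ i, β i * bregV F (fun j => ρ (u i j)) (fun j => ρ (μstar j)) =
        bregV F (fun j => ρ (μstar j)) (fun j => ρ (μ j))) := by
  set x : Fin N → (Fin d → ℝ) := fun i => (fun j => ρ (u i j)) with hx
  set ys : Fin d → ℝ := fun j => ρ (μstar j) with hys
  have key : ∀ w : Fin d → ℝ,
      ∑ i, β i * bregV F (x i) w
        = (∑ i, β i * F (x i)) - F w - (fderiv ℝ F w) (ys - w) := by
    intro w
    have hsw : ∑ i, β i • (x i - w) = ys - w := by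
      have h1 : ∑ i, β i • (x i - w) = (∑ i, β i • x i) - ∑ i, β i • w := by
        simp [smul_sub, Finset.sum_sub_distrib]
      have h2 : ∑ i, β i • w = w := by
        rw [← Finset.sum_smul, hsum, one_smul]
      rw [h1, h2, ← hμ]
    have hL : ∑ i, β i * (fderiv ℝ F w) (x i - w) = (fderiv ℝ F w) (ys - w) := by
      rw [← hsw, map_sum]
      simp [smul_eq_mul]
    have hFw : ∑ i, β i * F w = F w := by
      rw [← Finset.sum_mul, hsum, one_mul]
    simp only [bregV, mul_sub]
    rw [Finset.sum_sub_distrib, Finset.sum_sub_distrib, hFw, hL]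
  have part2 : ∀ μ : Fin d → ℝ, (∀ j, μ j ∈ I) →
      ∑ i, β i * bregV F (fun j => ρ (u i j)) (fun j => ρ (μ j)) -
        ∑ i, β i * bregV F (fun j => ρ (u i j)) (fun j => ρ (μstar j)) =
        bregV F (fun j => ρ (μstar j)) (fun j => ρ (μ j)) := by
    intro μ _
    have k1 := key (fun j => ρ (μ j))
    have k2 := key ys
    simp only [← hx, ← hys] at *
    rw [k1, k2]
    simp [bregV]
    ring
  refine ⟨?_, part2⟩
  intro μ hμmem hne
  have hinj : Set.InjOn ρ I := hmono.elim StrictMonoOn.injOn StrictAntiOn.injOn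
  have hyne : (fun j => ρ (μ j)) ≠ ys := by
    intro h
    apply hne
    funext j
    exact hinj (hμmem j) (hμI j) (congrFun h j)
  have hpos := bregV_pos F hFdiff hFconv (x := ys) (y := fun j => ρ (μ j)) (Ne.symm hyne)
  have := part2 μ hμmem
  simp only [← hx, ← hys] at this ⊢
  linarith
end

section
/- Let π₀, π₁ : X → (0,∞) be integrable densities, β ∈ (0,1), and define π_β^{geo} = π₀^{1−β} π₁^β. Then π_β^{geo} minimizes, over positive measurable π, the functional π ↦ (1−β)·D_KL[π:π₀] + β·D_KL[π:π₁], where D_KL[p:q] = ∫ p log(p/q) − ∫p + ∫q (unnormalized KL divergence); and the minimum value equals (1−β)∫π₀ + β∫π₁ − ∫π₀^{1−β}π₁^β. -/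
open MeasureTheory

/-- Unnormalized KL divergence `D_KL[p:q] = ∫ p log(p/q) − ∫p + ∫q`. -/
noncomputable def DKL {X : Type*} [MeasurableSpace X] (μ : Measure X) (p q : X → ℝ) : ℝ :=
  (∫ x, p x * Real.log (p x / q x) ∂μ) - (∫ x, p x ∂μ) + (∫ x, q x ∂μ)

lemma dkl_pointwise_nonneg (t s : ℝ) (ht : 0 < t) (hs : 0 < s) :
    0 ≤ t * Real.log (t / s) - t + s := by
  have h := Real.log_le_sub_one_of_pos (div_pos hs ht)
  have h2 : t * (s / t) = s := by field_simp
  have h3 : t * Real.log (s / t) ≤ t * (s / t - 1) :=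
    mul_le_mul_of_nonneg_left h ht.le
  rw [Real.log_div ht.ne' hs.ne']
  rw [Real.log_div hs.ne' ht.ne'] at h3
  nlinarith

lemma log_combine (a b c β : ℝ) (ha : 0 < a) (hb : 0 < b) (hc : 0 < c) :
    (1 - β) * (a * Real.log (a / b)) + β * (a * Real.log (a / c)) =
      a * Real.log (a / (b ^ (1 - β) * c ^ β)) := by
  rw [Real.log_div ha.ne' hb.ne', Real.log_div ha.ne' hc.ne',
    Real.log_div ha.ne' (by positivity : (b ^ (1 - β) * c ^ β) ≠ 0),
    Real.log_mul (by positivity) (by positivity),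
    Real.log_rpow hb, Real.log_rpow hc]
  ring

/-- The geometric path minimizes `π ↦ (1−β) D_KL[π:π₀] + β D_KL[π:π₁]`, and its
minimum value is `(1−β)∫π₀ + β∫π₁ − ∫π₀^{1−β}π₁^β`. -/
theorem geometric_path_minimizes_expected_reverse_KL {X : Type*} [MeasurableSpace X]
    (μ : Measure X) [SigmaFinite μ]
    (π₀ π₁ : X → ℝ) (h0 : ∀ x, 0 < π₀ x) (h1 : ∀ x, 0 < π₁ x)
    (hm0 : Measurable π₀) (hm1 : Measurable π₁)
    (hi0 : Integrable π₀ μ) (hi1 : Integrable π₁ μ)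
    (β : ℝ) (hβ : β ∈ Set.Ioo (0:ℝ) 1)
    (hgi : Integrable (fun x => π₀ x ^ (1 - β) * π₁ x ^ β) μ)
    (hgl0 : Integrable (fun x => (π₀ x ^ (1 - β) * π₁ x ^ β) *
      Real.log ((π₀ x ^ (1 - β) * π₁ x ^ β) / π₀ x)) μ)
    (hgl1 : Integrable (fun x => (π₀ x ^ (1 - β) * π₁ x ^ β) *
      Real.log ((π₀ x ^ (1 - β) * π₁ x ^ β) / π₁ x)) μ) :
    (∀ π : X → ℝ, Measurable π → (∀ x, 0 < π x) → Integrable π μ →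
      Integrable (fun x => π x * Real.log (π x / π₀ x)) μ →
      Integrable (fun x => π x * Real.log (π x / π₁ x)) μ →
      (1 - β) * DKL μ (fun x => π₀ x ^ (1 - β) * π₁ x ^ β) π₀ +
        β * DKL μ (fun x => π₀ x ^ (1 - β) * π₁ x ^ β) π₁ ≤
        (1 - β) * DKL μ π π₀ + β * DKL μ π π₁) ∧
    (1 - β) * DKL μ (fun x => π₀ x ^ (1 - β) * π₁ x ^ β) π₀ +
        β * DKL μ (fun x => π₀ x ^ (1 - β) * π₁ x ^ β) π₁ =
      (1 - β) * (∫ x, π₀ x ∂μ) + β * (∫ x, π₁ x ∂μ) -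
        ∫ x, π₀ x ^ (1 - β) * π₁ x ^ β ∂μ := by
  set g : X → ℝ := fun x => π₀ x ^ (1 - β) * π₁ x ^ β with hg_def
  have hg : ∀ x, 0 < g x := fun x =>
    mul_pos (Real.rpow_pos_of_pos (h0 x) _) (Real.rpow_pos_of_pos (h1 x) _)
  -- The general formula: for any positive π with integrability, F π rewrites.
  have key : ∀ π : X → ℝ, (∀ x, 0 < π x) → Integrable π μ →
      Integrable (fun x => π x * Real.log (π x / π₀ x)) μ →
      Integrable (fun x => π x * Real.log (π x / π₁ x)) μ →
      (Integrable (fun x => π x * Real.log (π x / g x)) μ ∧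
      (1 - β) * DKL μ π π₀ + β * DKL μ π π₁ =
        (∫ x, π x * Real.log (π x / g x) ∂μ) - (∫ x, π x ∂μ) +
          ((1 - β) * (∫ x, π₀ x ∂μ) + β * (∫ x, π₁ x ∂μ))) := by
    intro π hπ hiπ hil0 hil1
    have heq : (fun x => π x * Real.log (π x / g x)) =
        fun x => (1 - β) * (π x * Real.log (π x / π₀ x)) +
          β * (π x * Real.log (π x / π₁ x)) := by
      funext x
      exact (log_combine (π x) (π₀ x) (π₁ x) β (hπ x) (h0 x) (h1 x)).symm
    have hint : Integrable (fun x => π x * Real.log (π x / g x)) μ := by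
      rw [heq]; exact (hil0.const_mul _).add (hil1.const_mul _)
    refine ⟨hint, ?_⟩
    have hIeq : (∫ x, π x * Real.log (π x / g x) ∂μ) =
        (1 - β) * (∫ x, π x * Real.log (π x / π₀ x) ∂μ) +
          β * (∫ x, π x * Real.log (π x / π₁ x) ∂μ) := by
      rw [heq, integral_add (hil0.const_mul _) (hil1.const_mul _),
        integral_const_mul, integral_const_mul]
    simp only [DKL]
    rw [hIeq]; ring
  obtain ⟨hgint, hgF⟩ := key g hg hgi hgl0 hgl1
  -- value at g : the log term vanishes
  have hglog : (∫ x, g x * Real.log (g x / g x) ∂μ) = 0 := by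
    have : (fun x => g x * Real.log (g x / g x)) = fun _ => (0:ℝ) := by
      funext x
      rw [div_self (hg x).ne', Real.log_one, mul_zero]
    rw [this, integral_zero]
  have hval : (1 - β) * DKL μ g π₀ + β * DKL μ g π₁ =
      (1 - β) * (∫ x, π₀ x ∂μ) + β * (∫ x, π₁ x ∂μ) - ∫ x, g x ∂μ := by
    rw [hgF, hglog]; ring
  refine ⟨?_, hval⟩
  intro π hmπ hπ hiπ hil0 hil1
  obtain ⟨hπint, hπF⟩ := key π hπ hiπ hil0 hil1
  rw [hval, hπF]
  have hnn : 0 ≤ ∫ x, (π x * Real.log (π x / g x) - π x + g x) ∂μ := by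
    apply integral_nonneg
    intro x
    exact dkl_pointwise_nonneg (π x) (g x) (hπ x) (hg x)
  have hsplit : (∫ x, (π x * Real.log (π x / g x) - π x + g x) ∂μ) =
      (∫ x, π x * Real.log (π x / g x) ∂μ) - (∫ x, π x ∂μ) + (∫ x, g x ∂μ) := by
    have hA : Integrable (fun x => π x * Real.log (π x / g x) - π x) μ := hπint.sub hiπ
    rw [integral_add hA hgi, integral_sub hπint hiπ]
  linarith [hsplit ▸ hnn]
end

section
/- Fix q ∈ (0,1) and let ρ_q(u) = log_q(u) = (u^{1−q} − 1)/(1−q) and f(r) = (1/q)(exp_q(r) − r − 1) on the range of ρ_q. Then for a, b > 0, the scalar Bregman divergence satisfies D_f(ρ_q(a), ρ_q(b)) = (1/q)a + (1/(1−q))b − (1/(q(1−q))) a^{1−q} b^q, the pointwise integrand of Amari's α-divergence of order q. -/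
noncomputable def logq (q u : ℝ) : ℝ := (u ^ (1 - q) - 1) / (1 - q)

noncomputable def expq (q t : ℝ) : ℝ := (max (1 + (1 - q) * t) 0) ^ (1 / (1 - q))

lemma one_add_logq (q u : ℝ) (hq1 : q < 1) (hu : 0 < u) :
    1 + (1 - q) * logq q u = u ^ (1 - q) := by
  have h : (1:ℝ) - q ≠ 0 := by linarith
  unfold logq
  field_simp
  ring

lemma expq_logq (q u : ℝ) (hq1 : q < 1) (hu : 0 < u) :
    expq q (logq q u) = u := by
  unfold expq
  rw [one_add_logq q u hq1 hu, max_eq_left (Real.rpow_nonneg hu.le _),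
    ← Real.rpow_mul hu.le, mul_one_div, div_self (by linarith : (1:ℝ) - q ≠ 0),
    Real.rpow_one]

lemma hasDerivAt_expq (q t : ℝ) (hq1 : q < 1) (ht : 0 < 1 + (1 - q) * t) :
    HasDerivAt (expq q) ((1 + (1 - q) * t) ^ (q / (1 - q))) t := by
  have h1q : (0:ℝ) < 1 - q := by linarith
  have hlin : HasDerivAt (fun s : ℝ => 1 + (1 - q) * s) (1 - q) t := by
    simpa using ((hasDerivAt_id t).const_mul (1 - q)).const_add 1
  have hr : HasDerivAt (fun s : ℝ => (1 + (1 - q) * s) ^ (1 / (1 - q)))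
      ((1 / (1 - q)) * (1 + (1 - q) * t) ^ (1 / (1 - q) - 1) * (1 - q)) t :=
    (Real.hasDerivAt_rpow_const (p := 1 / (1 - q)) (Or.inl ht.ne')).comp (h := fun s : ℝ => 1 + (1 - q) * s) t hlin
  have heq : (fun s : ℝ => (1 + (1 - q) * s) ^ (1 / (1 - q))) =ᶠ[nhds t] expq q := by
    have hcont : Continuous fun s : ℝ => 1 + (1 - q) * s := by continuity
    filter_upwards [(hcont.tendsto t).eventually (eventually_gt_nhds ht)] with s hs
    unfold expq
    rw [max_eq_left hs.le]
  have := hr.congr_of_eventuallyEq heq.symm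
  refine this.congr_deriv (Eq.symm ?_)
  rw [one_div_mul_eq_div, div_mul_eq_mul_div, mul_comm, mul_div_assoc,
    div_self h1q.ne', mul_one]
  congr 1
  field_simp
  ring

lemma deriv_f (q t : ℝ) (hq1 : q < 1) (ht : 0 < 1 + (1 - q) * t) :
    deriv (fun r => (1 / q) * (expq q r - r - 1)) t =
      (1 / q) * ((1 + (1 - q) * t) ^ (q / (1 - q)) - 1) := by
  have h := (((hasDerivAt_expq q t hq1 ht).sub (hasDerivAt_id t)).sub_const 1).const_mul (1 / q)
  simpa using h.deriv

/-- The Bregman divergence generated by `f(r) = (1/q)(exp_q r − r − 1)` in the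
`log_q` representation is the pointwise Amari α-divergence integrand of order `q`. -/
theorem breg_logq_eq_amari_integrand (q : ℝ) (hq : q ∈ Set.Ioo (0:ℝ) 1)
    (a b : ℝ) (ha : 0 < a) (hb : 0 < b) :
    breg (fun r => (1 / q) * (expq q r - r - 1)) (logq q a) (logq q b) =
      (1 / q) * a + (1 / (1 - q)) * b -
        (1 / (q * (1 - q))) * (a ^ (1 - q) * b ^ q) := by
  obtain ⟨hq0, hq1⟩ := hq
  have h1q : (0:ℝ) < 1 - q := by linarith
  have hbpos : 0 < 1 + (1 - q) * logq q b := by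
    rw [one_add_logq q b hq1 hb]; exact Real.rpow_pos_of_pos hb _
  have hE : (1 + (1 - q) * logq q b) ^ (q / (1 - q)) = b ^ q := by
    rw [one_add_logq q b hq1 hb, ← Real.rpow_mul hb.le, mul_div_assoc',
      mul_comm, mul_div_assoc, div_self h1q.ne', mul_one]
  have hd := deriv_f q (logq q b) hq1 hbpos
  rw [hE] at hd
  have hBq : b ^ q * b ^ (1 - q) = b := by
    rw [← Real.rpow_add hb]; norm_num
  unfold breg
  rw [hd]
  simp only [expq_logq q a hq1 ha, expq_logq q b hq1 hb]
  unfold logq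
  field_simp
  linear_combination hBq
end

section
/- Fix q ∈ (0,1), let ρ(u) = log_q(u) and f(r) = (1/(2−q))·exp_q(r)^{2−q} − 1/(2−q). Then for a, b > 0, the scalar Bregman divergence D_f(ρ(a), ρ(b)) equals the pointwise Beta-divergence integrand of order 2−q applied to (b,a): D_f(ρ(a),ρ(b)) = (1/((1−q)(2−q))) b^{2−q} + (1/(2−q)) a^{2−q} − (1/(1−q)) b·a^{1−q}, and this quantity is nonnegative with equality iff a = b. -/
/-- The Bregman divergence generated by `f(r) = (1/(2−q)) exp_q(r)^{2−q} − 1/(2−q)` in the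
`log_q` representation is the pointwise Beta-divergence integrand of order `2−q`
applied to `(b,a)`; it is nonnegative, and zero iff `a = b`. -/
theorem breg_logq_eq_beta_integrand (q : ℝ) (hq : q ∈ Set.Ioo (0:ℝ) 1)
    (a b : ℝ) (ha : 0 < a) (hb : 0 < b) :
    breg (fun r => (1 / (2 - q)) * expq q r ^ (2 - q) - 1 / (2 - q))
        (logq q a) (logq q b) =
      (1 / ((1 - q) * (2 - q))) * b ^ (2 - q) + (1 / (2 - q)) * a ^ (2 - q) -
        (1 / (1 - q)) * (b * a ^ (1 - q)) ∧
    0 ≤ (1 / ((1 - q) * (2 - q))) * b ^ (2 - q) + (1 / (2 - q)) * a ^ (2 - q) -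
        (1 / (1 - q)) * (b * a ^ (1 - q)) ∧
    ((1 / ((1 - q) * (2 - q))) * b ^ (2 - q) + (1 / (2 - q)) * a ^ (2 - q) -
        (1 / (1 - q)) * (b * a ^ (1 - q)) = 0 ↔ a = b) := by
  obtain ⟨hq0, hq1⟩ := hq
  have h1q : (0:ℝ) < 1 - q := by linarith
  have h2q : (0:ℝ) < 2 - q := by linarith
  -- exp_q inverts log_q on positive reals
  have hone : ∀ u : ℝ, 0 < u → 1 + (1 - q) * logq q u = u ^ (1 - q) := by
    intro u hu
    unfold logq
    field_simp
    ring
  have hexpq : ∀ u : ℝ, 0 < u → expq q (logq q u) = u := by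
    intro u hu
    have h1 : (0:ℝ) < u ^ (1 - q) := Real.rpow_pos_of_pos hu _
    unfold expq
    rw [hone u hu, max_eq_left h1.le, ← Real.rpow_mul hu.le, mul_one_div,
      div_self h1q.ne', Real.rpow_one]
  -- derivative of f at logq q b is b
  set t0 := logq q b with ht0
  have hc : 1 + (1 - q) * t0 = b ^ (1 - q) := hone b hb
  have hcpos : (0:ℝ) < 1 + (1 - q) * t0 := by rw [hc]; exact Real.rpow_pos_of_pos hb _
  set p : ℝ := (1 / (1 - q)) * (2 - q) with hp
  set g : ℝ → ℝ := fun t => (1 / (2 - q)) * (1 + (1 - q) * t) ^ p - 1 / (2 - q) with hg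
  have hlin : HasDerivAt (fun t : ℝ => 1 + (1 - q) * t) (1 - q) t0 := by
    simpa using ((hasDerivAt_id t0).const_mul (1 - q)).const_add 1
  have hgd : HasDerivAt g ((1 / (2 - q)) * ((1 - q) * p * (1 + (1 - q) * t0) ^ (p - 1))) t0 := by
    exact ((hlin.rpow_const (Or.inl hcpos.ne')).const_mul _).sub_const _
  have hval : (1 / (2 - q)) * ((1 - q) * p * (1 + (1 - q) * t0) ^ (p - 1)) = b := by
    have h1 : (1 - q) * p = 2 - q := by
      rw [hp]; field_simp
    have h2 : p - 1 = 1 / (1 - q) := by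
      rw [hp]; field_simp; ring
    rw [h1, h2, hc, ← Real.rpow_mul hb.le, mul_one_div, div_self h1q.ne', Real.rpow_one]
    field_simp
  rw [hval] at hgd
  have heq : (fun r => (1 / (2 - q)) * expq q r ^ (2 - q) - 1 / (2 - q)) =ᶠ[nhds t0] g := by
    have hopen : IsOpen {t : ℝ | 0 < 1 + (1 - q) * t} :=
      isOpen_lt continuous_const (by continuity)
    filter_upwards [hopen.mem_nhds hcpos] with t ht
    have ht' : (0:ℝ) < 1 + (1 - q) * t := ht
    simp only [hg, expq, max_eq_left ht'.le]
    rw [← Real.rpow_mul ht'.le]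
  have hfd : HasDerivAt (fun r => (1 / (2 - q)) * expq q r ^ (2 - q) - 1 / (2 - q)) b t0 :=
    hgd.congr_of_eventuallyEq heq
  -- part 1: the identity
  have hpart1 : breg (fun r => (1 / (2 - q)) * expq q r ^ (2 - q) - 1 / (2 - q))
      (logq q a) t0 =
      (1 / ((1 - q) * (2 - q))) * b ^ (2 - q) + (1 / (2 - q)) * a ^ (2 - q) -
        (1 / (1 - q)) * (b * a ^ (1 - q)) := by
    unfold breg
    rw [hfd.deriv]
    simp only [hexpq a ha, ht0, hexpq b hb]
    have hb2 : b ^ (2 - q) = b * b ^ (1 - q) := by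
      have h21 : (2 - q : ℝ) = 1 + (1 - q) := by ring
      rw [h21, Real.rpow_add hb, Real.rpow_one]
    unfold logq
    rw [hb2]
    field_simp
    ring
  -- Bernoulli-based analysis of K := t^(2-q) - (2-q) t + (1-q)
  set t : ℝ := b / a with htdef
  have htpos : 0 < t := div_pos hb ha
  set K : ℝ := t ^ (2 - q) - (2 - q) * t + (1 - q) with hK
  have hKnonneg : 0 ≤ K := by
    have := one_add_mul_self_le_rpow_one_add (s := t - 1) (by linarith) (p := 2 - q)
      (by linarith)
    have h' : (1 : ℝ) + (2 - q) * (t - 1) ≤ t ^ (2 - q) := by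
      simpa using this
    rw [hK]; nlinarith
  have hKzero : K = 0 ↔ t = 1 := by
    constructor
    · intro h
      by_contra hne
      have hs : t - 1 ≠ 0 := fun hs => hne (by linarith)
      have := one_add_mul_self_lt_rpow_one_add (s := t - 1) (by linarith) hs
        (p := 2 - q) (by linarith)
      have h' : (1 : ℝ) + (2 - q) * (t - 1) < t ^ (2 - q) := by
        simpa using this
      rw [hK] at h; nlinarith
    · intro h
      rw [hK, h, Real.one_rpow]; ring
  -- F = a^(2-q) * K / ((1-q)(2-q))
  have hbt : b ^ (2 - q) = a ^ (2 - q) * t ^ (2 - q) := by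
    rw [← Real.mul_rpow ha.le htpos.le, htdef, mul_div_cancel₀ _ ha.ne']
  have ha2 : a ^ (2 - q) = a ^ (1 - q) * a := by
    rw [← Real.rpow_add_one ha.ne']
    ring_nf
  have hFeq : (1 / ((1 - q) * (2 - q))) * b ^ (2 - q) + (1 / (2 - q)) * a ^ (2 - q) -
      (1 / (1 - q)) * (b * a ^ (1 - q)) = a ^ (2 - q) * K / ((1 - q) * (2 - q)) := by
    rw [hK, hbt]
    have hbeq : b = a * t := by rw [htdef, mul_div_cancel₀ _ ha.ne']
    rw [hbeq, ha2]
    field_simp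
    ring
  have hapos : 0 < a ^ (2 - q) := Real.rpow_pos_of_pos ha _
  have hden : (0:ℝ) < (1 - q) * (2 - q) := mul_pos h1q h2q
  refine ⟨hpart1, ?_, ?_⟩
  · rw [hFeq]
    positivity
  · rw [hFeq]
    rw [div_eq_zero_iff, mul_eq_zero]
    constructor
    · rintro (h | h)
      · rcases h with h | h
        · exact absurd h hapos.ne'
        · have := hKzero.mp h
          field_simp [htdef, eq_div_iff ha.ne'] at this
          rw [htdef, div_eq_one_iff_eq ha.ne'] at this
          linarith
      · exact absurd h hden.ne'
    · intro h
      left; right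
      rw [hKzero, htdef, h, div_self hb.ne']
end

section
/- Fix q ∈ (0,1) and λ > 0 with λ + 1 − q ≠ 0, let ρ(u) = log_q(u) = (u^{1−q}−1)/(1−q) and τ(u) = log_{1−λ}(u) = (u^λ − 1)/λ, and let f be a differentiable convex function with f′ = τ ∘ ρ⁻¹ given explicitly by f(r) = (1/(λ(λ+1−q))) exp_q(r)^{λ+1−q} − (1/λ) r − 1/(λ(λ+1−q)). Then for a, b > 0, D_f(ρ(a), ρ(b)) = (1/(λ(1−q)(λ+1−q)))·[(1−q) a^{λ+1−q} + λ b^{λ+1−q} − (λ+1−q) a^λ b^{1−q}], the pointwise Cichocki–Amari (α,β)-divergence integrand, and this is nonnegative. -/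
/-- The rho-tau Bregman divergence with `ρ = log_q`, `τ = log_{1−λ}` and generator
`f(r) = exp_q(r)^{λ+1−q}/(λ(λ+1−q)) − r/λ − 1/(λ(λ+1−q))` equals the pointwise
Cichocki–Amari (α,β)-divergence integrand, which is nonnegative. -/
theorem breg_logq_eq_cichocki_amari_integrand (q lam : ℝ)
    (hq : q ∈ Set.Ioo (0:ℝ) 1) (hlam : 0 < lam) (hne : lam + 1 - q ≠ 0)
    (a b : ℝ) (ha : 0 < a) (hb : 0 < b) :
    breg (fun r => (1 / (lam * (lam + 1 - q))) * expq q r ^ (lam + 1 - q) -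
        (1 / lam) * r - 1 / (lam * (lam + 1 - q))) (logq q a) (logq q b) =
      (1 / (lam * (1 - q) * (lam + 1 - q))) *
        ((1 - q) * a ^ (lam + 1 - q) + lam * b ^ (lam + 1 - q) -
          (lam + 1 - q) * (a ^ (1 - q) * b ^ lam)) ∧
    0 ≤ (1 / (lam * (1 - q) * (lam + 1 - q))) *
        ((1 - q) * a ^ (lam + 1 - q) + lam * b ^ (lam + 1 - q) -
          (lam + 1 - q) * (a ^ (1 - q) * b ^ lam)) := by
  obtain ⟨hq0, hq1⟩ := hq
  have h1q : 0 < 1 - q := by linarith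
  have hc : 0 < lam + 1 - q := by linarith
  have hkey : ∀ u : ℝ, 0 < u → 1 + (1 - q) * logq q u = u ^ (1 - q) := by
    intro u hu; unfold logq; field_simp; ring
  have hexp : ∀ u : ℝ, 0 < u → expq q (logq q u) = u := by
    intro u hu
    unfold expq
    rw [hkey u hu, max_eq_left (Real.rpow_pos_of_pos hu _).le, ← Real.rpow_mul hu.le,
      mul_one_div, div_self h1q.ne', Real.rpow_one]
  -- derivative of the generator at logq q b
  set c : ℝ := (lam + 1 - q) / (1 - q) with hcdef
  set r₀ : ℝ := logq q b with hr₀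
  have hpos : 0 < 1 + (1 - q) * r₀ := by
    rw [hr₀, hkey b hb]; exact Real.rpow_pos_of_pos hb _
  have h₁ : HasDerivAt (fun r : ℝ => 1 + (1 - q) * r) (1 - q) r₀ := by
    simpa using ((hasDerivAt_id r₀).const_mul (1 - q)).const_add 1
  have h₂ : HasDerivAt (fun r : ℝ => (1 + (1 - q) * r) ^ c)
      (c * (1 + (1 - q) * r₀) ^ (c - 1) * (1 - q)) r₀ := by
    have := h₁.rpow_const (p := c) (Or.inl hpos.ne')
    convert this using 1; ring
  have hg : HasDerivAt (fun r : ℝ => (1 / (lam * (lam + 1 - q))) * (1 + (1 - q) * r) ^ c -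
      (1 / lam) * r - 1 / (lam * (lam + 1 - q)))
      ((1 / (lam * (lam + 1 - q))) * (c * (1 + (1 - q) * r₀) ^ (c - 1) * (1 - q)) - 1 / lam) r₀ := by
    simpa using ((h₂.const_mul (1 / (lam * (lam + 1 - q)))).sub
      ((hasDerivAt_id r₀).const_mul (1 / lam))).sub_const (1 / (lam * (lam + 1 - q)))
  have heq : (fun r : ℝ => (1 / (lam * (lam + 1 - q))) * expq q r ^ (lam + 1 - q) -
      (1 / lam) * r - 1 / (lam * (lam + 1 - q))) =ᶠ[nhds r₀]
      (fun r : ℝ => (1 / (lam * (lam + 1 - q))) * (1 + (1 - q) * r) ^ c -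
      (1 / lam) * r - 1 / (lam * (lam + 1 - q))) := by
    have hopen : IsOpen {r : ℝ | 0 < 1 + (1 - q) * r} :=
      isOpen_lt continuous_const (by continuity)
    filter_upwards [hopen.mem_nhds hpos] with r hr
    have : expq q r ^ (lam + 1 - q) = (1 + (1 - q) * r) ^ c := by
      unfold expq
      rw [max_eq_left hr.le, ← Real.rpow_mul hr.le, hcdef, one_div, inv_mul_eq_div]
    rw [this]
  have hderiv : deriv (fun r : ℝ => (1 / (lam * (lam + 1 - q))) * expq q r ^ (lam + 1 - q) -
      (1 / lam) * r - 1 / (lam * (lam + 1 - q))) r₀ = (b ^ lam - 1) / lam := by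
    rw [Filter.EventuallyEq.deriv_eq heq, hg.deriv]
    have h1 : 1 + (1 - q) * r₀ = b ^ (1 - q) := by rw [hr₀, hkey b hb]
    have h2 : (b ^ (1 - q) : ℝ) ^ (c - 1) = b ^ lam := by
      rw [← Real.rpow_mul hb.le]
      congr 1
      rw [hcdef]; field_simp; ring
    rw [h1, h2, hcdef]
    field_simp
  have hEA : expq q (logq q a) ^ (lam + 1 - q) = a ^ (lam + 1 - q) := by rw [hexp a ha]
  have hEB : expq q (logq q b) ^ (lam + 1 - q) = b ^ (lam + 1 - q) := by rw [hexp b hb]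
  have hYQ : b ^ (lam + 1 - q) = b ^ lam * b ^ (1 - q) := by
    rw [← Real.rpow_add hb]; ring_nf
  have halg : ∀ X P Q R : ℝ,
      ((1 / (lam * (lam + 1 - q))) * X - (1 / lam) * ((P - 1) / (1 - q)) -
          1 / (lam * (lam + 1 - q))) -
        ((1 / (lam * (lam + 1 - q))) * (R * Q) - (1 / lam) * ((Q - 1) / (1 - q)) -
          1 / (lam * (lam + 1 - q))) -
        ((P - 1) / (1 - q) - (Q - 1) / (1 - q)) * ((R - 1) / lam) =
      (1 / (lam * (1 - q) * (lam + 1 - q))) *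
        ((1 - q) * X + lam * (R * Q) - (lam + 1 - q) * (P * R)) := by
    intro X P Q R
    field_simp
    ring
  constructor
  · unfold breg
    rw [hderiv]
    simp only
    rw [hEA, hEB]
    unfold logq
    rw [hYQ]
    exact halg (a ^ (lam + 1 - q)) (a ^ (1 - q)) (b ^ (1 - q)) (b ^ lam)
  · -- nonnegativity via weighted AM-GM
    have hw : (1 - q) / (lam + 1 - q) + lam / (lam + 1 - q) = 1 := by field_simp; ring
    have hgm := Real.geom_mean_le_arith_mean2_weighted
      (div_nonneg h1q.le hc.le) (div_nonneg hlam.le hc.le)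
      (Real.rpow_pos_of_pos ha (lam + 1 - q)).le
      (Real.rpow_pos_of_pos hb (lam + 1 - q)).le hw
    have hA : (a ^ (lam + 1 - q) : ℝ) ^ ((1 - q) / (lam + 1 - q)) = a ^ (1 - q) := by
      rw [← Real.rpow_mul ha.le]
      congr 1; field_simp
    have hB : (b ^ (lam + 1 - q) : ℝ) ^ (lam / (lam + 1 - q)) = b ^ lam := by
      rw [← Real.rpow_mul hb.le]
      congr 1; field_simp
    rw [hA, hB] at hgm
    have hpos2 : (0:ℝ) ≤ 1 / (lam * (1 - q) * (lam + 1 - q)) := by positivity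
    apply mul_nonneg hpos2
    have h3 : (1 - q) / (lam + 1 - q) * a ^ (lam + 1 - q) + lam / (lam + 1 - q) * b ^ (lam + 1 - q)
        = ((1 - q) * a ^ (lam + 1 - q) + lam * b ^ (lam + 1 - q)) / (lam + 1 - q) := by
      field_simp
    rw [h3] at hgm
    rw [le_div_iff₀ hc] at hgm
    nlinarith [hgm]
end

section
/- Fix q ∈ (0,1), probability densities π₀, π₁ > 0 on X with normalization constants Z(0), Z(1) of underlying unnormalized densities π̃₀ = Z(0)π₀, π̃₁ = Z(1)π₁, and β ∈ (0,1). Define β′ = β Z(1)^{q−1} / ((1−β) Z(0)^{q−1} + β Z(1)^{q−1}). Then pointwise for all x, the quasi-arithmetic q-mixture of the normalized densities is proportional to that of the unnormalized densities with reweighted parameter: exp_q((1−β) log_q π₀(x) + β log_q π₁(x)) = c⁻¹ · exp_q((1−β′) log_q π̃₀(x) + β′ log_q π̃₁(x)), where c = [(1−β) Z(0)^{−(1−q)} + β Z(1)^{−(1−q)}]^{−1/(1−q)}. -/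
/-- The quasi-arithmetic q-mixture of normalized densities equals (pointwise) the
q-mixture of the unnormalized densities with reweighted mixing parameter `β′`,
rescaled by `c = [(1−β)Z(0)^{−(1−q)} + βZ(1)^{−(1−q)}]^{−1/(1−q)}`. -/
theorem qMixture_normalized_vs_unnormalized {X : Type*} (q : ℝ)
    (hq : q ∈ Set.Ioo (0:ℝ) 1) (Z0 Z1 : ℝ) (hZ0 : 0 < Z0) (hZ1 : 0 < Z1)
    (β : ℝ) (hβ : β ∈ Set.Ioo (0:ℝ) 1)
    (π₀ π₁ : X → ℝ) (h0 : ∀ x, 0 < π₀ x) (h1 : ∀ x, 0 < π₁ x) :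
    ∀ x : X,
      expq q ((1 - β) * logq q (π₀ x) + β * logq q (π₁ x)) =
        (((1 - β) * Z0 ^ (-(1 - q)) + β * Z1 ^ (-(1 - q))) ^ (-(1 / (1 - q))))⁻¹ *
          expq q
            ((1 - β * Z1 ^ (q - 1) / ((1 - β) * Z0 ^ (q - 1) + β * Z1 ^ (q - 1))) *
                logq q (Z0 * π₀ x) +
              (β * Z1 ^ (q - 1) / ((1 - β) * Z0 ^ (q - 1) + β * Z1 ^ (q - 1))) *
                logq q (Z1 * π₁ x)) := by
  obtain ⟨hq0, hq1⟩ := hq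
  obtain ⟨hβ0, hβ1⟩ := hβ
  intro x
  have hu := h0 x
  have hv := h1 x
  have h1q : (0:ℝ) < 1 - q := by linarith
  have hqne : (1:ℝ) - q ≠ 0 := ne_of_gt h1q
  have hβ1' : (0:ℝ) < 1 - β := by linarith
  -- rewrite the exponents q-1 and -(1-q) as inverses of rpow (1-q)
  have eZ0 : Z0 ^ (q - 1) = (Z0 ^ (1 - q))⁻¹ := by
    rw [show q - 1 = -(1 - q) by ring, Real.rpow_neg hZ0.le]
  have eZ1 : Z1 ^ (q - 1) = (Z1 ^ (1 - q))⁻¹ := by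
    rw [show q - 1 = -(1 - q) by ring, Real.rpow_neg hZ1.le]
  have eZ0' : Z0 ^ (-(1 - q)) = (Z0 ^ (1 - q))⁻¹ := by rw [Real.rpow_neg hZ0.le]
  have eZ1' : Z1 ^ (-(1 - q)) = (Z1 ^ (1 - q))⁻¹ := by rw [Real.rpow_neg hZ1.le]
  set P := Z0 ^ (1 - q) with hP
  set Q := Z1 ^ (1 - q) with hQ
  have hPp : 0 < P := Real.rpow_pos_of_pos hZ0 _
  have hQp : 0 < Q := Real.rpow_pos_of_pos hZ1 _
  have hup : 0 < (π₀ x) ^ (1 - q) := Real.rpow_pos_of_pos hu _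
  have hvp : 0 < (π₁ x) ^ (1 - q) := Real.rpow_pos_of_pos hv _
  set U := (π₀ x) ^ (1 - q) with hU
  set V := (π₁ x) ^ (1 - q) with hV
  have e0m : (Z0 * π₀ x) ^ (1 - q) = P * U := Real.mul_rpow hZ0.le hu.le
  have e1m : (Z1 * π₁ x) ^ (1 - q) = Q * V := Real.mul_rpow hZ1.le hv.le
  -- abbreviations
  have hs : 0 < (1 - β) * P⁻¹ + β * Q⁻¹ := by positivity
  have hM : 0 < (1 - β) * U + β * V := by positivity
  set s := (1 - β) * P⁻¹ + β * Q⁻¹ with hsdef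
  set M := (1 - β) * U + β * V with hMdef
  -- LHS argument
  have hL : 1 + (1 - q) * ((1 - β) * logq q (π₀ x) + β * logq q (π₁ x)) = M := by
    unfold logq
    rw [← hU, ← hV, hMdef]
    field_simp
    ring
  -- RHS argument
  have hR : 1 + (1 - q) *
      ((1 - β * Z1 ^ (q - 1) / ((1 - β) * Z0 ^ (q - 1) + β * Z1 ^ (q - 1))) *
          logq q (Z0 * π₀ x) +
        (β * Z1 ^ (q - 1) / ((1 - β) * Z0 ^ (q - 1) + β * Z1 ^ (q - 1))) *
          logq q (Z1 * π₁ x)) = M / s := by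
    unfold logq
    rw [e0m, e1m, eZ0, eZ1, hMdef, hsdef]
    have hsne : (1 - β) * P⁻¹ + β * Q⁻¹ ≠ 0 := ne_of_gt hs
    field_simp
    ring
  have hMs : 0 < M / s := div_pos hM hs
  -- compute both expq
  unfold expq
  rw [hL, hR, max_eq_left hM.le, max_eq_left hMs.le, eZ0', eZ1', ← hsdef]
  rw [Real.rpow_neg hs.le, inv_inv, ← Real.mul_rpow hs.le hMs.le,
    mul_div_cancel₀ _ (ne_of_gt hs)]
end
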